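/- For every integer n ≥ 26, the polynomial D_n(t) = t^9 - (n+3)t^8 - (n-4)t^7 + (2n-8)t^6 + (2n+8)t^5 + (2n-8)t^4 - (2n-11)t^3 + (3n-5)t^2 + (3n+4)t - 4(n+1) has exactly two distinct negative real roots. -/

import Mathlib

open Polynomial

/-- The denominator polynomial `D_n(t)`, over `ℝ`. -/
noncomputable def Dpoly (n : ℕ) : Polynomial ℝ :=
  X ^ 9 - C ((n : ℝ) + 3) * X ^ 8 - C ((n : ℝ) - 4) * X ^ 7 + C (2 * (n : ℝ) - 8) * X ^ 6
    + C (2 * (n : ℝ) + 8) * X ^ 5 + C (2 * (n : ℝ) - 8) * X ^ 4 - C (2 * (n : ℝ) - 11) * X ^ 3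
    + C (3 * (n : ℝ) - 5) * X ^ 2 + C (3 * (n : ℝ) + 4) * X - C (4 * ((n : ℝ) + 1))

open Set Filter Topology

lemma slope_right {f : ℝ → ℝ} {f' : ℝ → ℝ} (hf : ∀ x, HasDerivAt f (f' x) x)
    {c : ℝ} (hc : f c = 0) (hd : 0 < f' c) :
    ∀ᶠ z in 𝓝[>] c, 0 < f z := by
  have hslope := hasDerivAt_iff_tendsto_slope.mp (hf c)
  have hev : ∀ᶠ z in 𝓝[≠] c, 0 < slope f c z := hslope.eventually (lt_mem_nhds hd)
  have hmono : 𝓝[>] c ≤ 𝓝[≠] c := nhdsWithin_mono c fun x hx => ne_of_gt hx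
  filter_upwards [hmono hev, self_mem_nhdsWithin] with z hz hz'
  have hzc : (0:ℝ) < z - c := sub_pos.mpr hz'
  have h2 : 0 < (f z - f c) / (z - c) := by rw [slope_def_field] at hz; exact hz
  rw [hc, sub_zero] at h2
  have := (div_pos_iff).mp h2
  rcases this with ⟨h3, _⟩ | ⟨_, h4⟩
  · exact h3
  · linarith

lemma slope_left {f : ℝ → ℝ} {f' : ℝ → ℝ} (hf : ∀ x, HasDerivAt f (f' x) x)
    {c : ℝ} (hc : f c = 0) (hd : 0 < f' c) :
    ∀ᶠ z in 𝓝[<] c, f z < 0 := by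
  have hslope := hasDerivAt_iff_tendsto_slope.mp (hf c)
  have hev : ∀ᶠ z in 𝓝[≠] c, 0 < slope f c z := hslope.eventually (lt_mem_nhds hd)
  have hmono : 𝓝[<] c ≤ 𝓝[≠] c := nhdsWithin_mono c fun x hx => ne_of_lt hx
  filter_upwards [hmono hev, self_mem_nhdsWithin] with z hz hz'
  have hzc : z - c < 0 := sub_neg.mpr hz'
  have h2 : 0 < (f z - f c) / (z - c) := by rw [slope_def_field] at hz; exact hz
  rw [hc, sub_zero] at h2
  have := (div_pos_iff).mp h2
  rcases this with ⟨_, h3⟩ | ⟨h4, _⟩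
  · linarith
  · exact h4

lemma atMostOne {f : ℝ → ℝ} {f' : ℝ → ℝ} (hf : ∀ x, HasDerivAt f (f' x) x)
    (a b : ℝ) (hroot : ∀ x, a ≤ x → x ≤ b → f x = 0 → 0 < f' x) :
    ∀ x y, a ≤ x → x ≤ b → a ≤ y → y ≤ b → f x = 0 → f y = 0 → x = y := by
  have cont : Continuous f := by
    have : Differentiable ℝ f := fun x => (hf x).differentiableAt
    exact this.continuous
  have core : ∀ x y, a ≤ x → x ≤ b → a ≤ y → y ≤ b → f x = 0 → f y = 0 → x < y → False := by
    intro x y hax hxb hay hyb hfx hfy hxy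
    have hdy : 0 < f' y := hroot y hay hyb hfy
    have hleft := slope_left hf hfy hdy
    have hIoo : Ioo x y ∈ 𝓝[<] y := Ioo_mem_nhdsLT_of_mem ⟨hxy, le_refl y⟩
    obtain ⟨z, hz1, hz2⟩ := (hleft.and (eventually_of_mem hIoo fun w hw => hw)).exists
    set S : Set ℝ := Icc x z ∩ f ⁻¹' {0} with hS
    have hxS : x ∈ S := ⟨⟨le_refl x, hz2.1.le⟩, hfx⟩
    have hSne : S.Nonempty := ⟨x, hxS⟩
    have hSbdd : BddAbove S := (bddAbove_Icc).mono inter_subset_left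
    have hSclosed : IsClosed S := isClosed_Icc.inter (isClosed_singleton.preimage cont)
    set c := sSup S with hc
    have hcS : c ∈ S := hSclosed.csSup_mem hSne hSbdd
    have hfc : f c = 0 := hcS.2
    have hcz : c ≤ z := hcS.1.2
    have hcz' : c < z := lt_of_le_of_ne hcz (by intro h; rw [h] at hfc; exact (ne_of_lt hz1) hfc)
    have hxc : x ≤ c := hcS.1.1
    have hdc : 0 < f' c := hroot c (le_trans hax hxc) (by linarith [hz2.2]) hfc
    have hright := slope_right hf hfc hdc
    have hIoo2 : Ioo c z ∈ 𝓝[>] c := Ioo_mem_nhdsGT_of_mem ⟨le_refl c, hcz'⟩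
    obtain ⟨w, hw1, hw2⟩ := (hright.and (eventually_of_mem hIoo2 fun u hu => hu)).exists
    have hivt : (0:ℝ) ∈ Icc (f z) (f w) := ⟨hz1.le, hw1.le⟩
    obtain ⟨v, hv1, hv2⟩ := intermediate_value_Icc' hw2.2.le cont.continuousOn hivt
    have hvS : v ∈ S := ⟨⟨le_trans hxc (le_trans hw2.1.le hv1.1), hv1.2⟩, hv2⟩
    have : v ≤ c := le_csSup hSbdd hvS
    linarith [hw2.1, hv1.1]
  intro x y hax hxb hay hyb hfx hfy
  rcases lt_trichotomy x y with h | h | h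
  · exact (core x y hax hxb hay hyb hfx hfy h).elim
  · exact h
  · exact (core y x hay hyb hax hxb hfy hfx h).elim

noncomputable def fP : ℝ → ℝ := fun t => 1*t^9 + (-3)*t^8 + 4*t^7 + (-8)*t^6 + 8*t^5 + (-8)*t^4 + 11*t^3 + (-5)*t^2 + 4*t + (-4)
noncomputable def fQ : ℝ → ℝ := fun t => (-1)*t^8 + (-1)*t^7 + 2*t^6 + 2*t^5 + 2*t^4 + (-2)*t^3 + 3*t^2 + 3*t + (-4)
noncomputable def fQt : ℝ → ℝ := fun t => (-1)*t^7 + 2*t^5 + 2*t^3 + (-4)*t^2 + 7*t + (-4)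
noncomputable def fW : ℝ → ℝ := fun t => (-1)*t^16 + (-2)*t^15 + 13*t^14 + (-20)*t^13 + 16*t^12 + (-36)*t^11 + 74*t^10 + (-48)*t^9 + (-22)*t^8 + 28*t^7 + (-204)*t^6 + 276*t^5 + (-193)*t^4 + 242*t^3 + (-183)*t^2 + 64*t + (-4)
noncomputable def fPd : ℝ → ℝ := fun t => 9*t^8 + (-24)*t^7 + 28*t^6 + (-48)*t^5 + 40*t^4 + (-32)*t^3 + 33*t^2 + (-10)*t + 4
noncomputable def fQd : ℝ → ℝ := fun t => (-8)*t^7 + (-7)*t^6 + 12*t^5 + 10*t^4 + 8*t^3 + (-6)*t^2 + 6*t + 3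


set_option maxHeartbeats 2000000 in
lemma cQtail : ∀ t : ℝ, t ≤ (-97/50) → 0 < -fQ t := by
  intro t h1
  have hu : (0:ℝ) ≤ ((-97/50) - t) := by linarith
  have h1 : (0:ℝ) ≤ (68930971319877/390625000000) * ((-97/50) - t)^1 := mul_nonneg (by norm_num) (pow_nonneg hu 1)
  have h2 : (0:ℝ) ≤ (4507035146581/7812500000) * ((-97/50) - t)^2 := mul_nonneg (by norm_num) (pow_nonneg hu 2)
  have h3 : (0:ℝ) ≤ (126372506321/156250000) * ((-97/50) - t)^3 := mul_nonneg (by norm_num) (pow_nonneg hu 3)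
  have h4 : (0:ℝ) ≤ (100073673/156250) * ((-97/50) - t)^4 := mul_nonneg (by norm_num) (pow_nonneg hu 4)
  have h5 : (0:ℝ) ≤ (19285119/62500) * ((-97/50) - t)^5 := mul_nonneg (by norm_num) (pow_nonneg hu 5)
  have h6 : (0:ℝ) ≤ (112251/1250) * ((-97/50) - t)^6 := mul_nonneg (by norm_num) (pow_nonneg hu 6)
  have h7 : (0:ℝ) ≤ (363/25) * ((-97/50) - t)^7 := mul_nonneg (by norm_num) (pow_nonneg hu 7)
  have h8 : (0:ℝ) ≤ 1 * ((-97/50) - t)^8 := mul_nonneg (by norm_num) (pow_nonneg hu 8)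
  have hE : -fQ t = 1*t^8 + 1*t^7 + (-2)*t^6 + (-2)*t^5 + (-2)*t^4 + 2*t^3 + (-3)*t^2 + (-3)*t + 4 := by simp only [fQ]; try ring
  have key : (1*t^8 + 1*t^7 + (-2)*t^6 + (-2)*t^5 + (-2)*t^4 + 2*t^3 + (-3)*t^2 + (-3)*t + 4) = (45004647576311/39062500000000) + ((68930971319877/390625000000) * ((-97/50) - t)^1 + (4507035146581/7812500000) * ((-97/50) - t)^2 + (126372506321/156250000) * ((-97/50) - t)^3 + (100073673/156250) * ((-97/50) - t)^4 + (19285119/62500) * ((-97/50) - t)^5 + (112251/1250) * ((-97/50) - t)^6 + (363/25) * ((-97/50) - t)^7 + 1 * ((-97/50) - t)^8) := by ring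
  rw [hE]
  linarith [key, h1, h2, h3, h4, h5, h6, h7, h8]

set_option maxHeartbeats 2000000 in
lemma cD26tail : ∀ t : ℝ, t ≤ (-97/50) → 0 < -(fP t + 26 * fQ t) := by
  intro t h1
  have hu : (0:ℝ) ≤ ((-97/50) - t) := by linarith
  have h1 : (0:ℝ) ≤ (493572079416838449/39062500000000) * ((-97/50) - t)^1 := mul_nonneg (by norm_num) (pow_nonneg hu 1)
  have h2 : (0:ℝ) ≤ (5477046521748617/195312500000) * ((-97/50) - t)^2 := mul_nonneg (by norm_num) (pow_nonneg hu 2)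
  have h3 : (0:ℝ) ≤ (131439226589359/3906250000) * ((-97/50) - t)^3 := mul_nonneg (by norm_num) (pow_nonneg hu 3)
  have h4 : (0:ℝ) ≤ (3851356934441/156250000) * ((-97/50) - t)^4 := mul_nonneg (by norm_num) (pow_nonneg hu 4)
  have h5 : (0:ℝ) ≤ (35785171003/3125000) * ((-97/50) - t)^5 := mul_nonneg (by norm_num) (pow_nonneg hu 5)
  have h6 : (0:ℝ) ≤ (103956233/31250) * ((-97/50) - t)^6 := mul_nonneg (by norm_num) (pow_nonneg hu 6)
  have h7 : (0:ℝ) ≤ (352231/625) * ((-97/50) - t)^7 := mul_nonneg (by norm_num) (pow_nonneg hu 7)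
  have h8 : (0:ℝ) ≤ (2323/50) * ((-97/50) - t)^8 := mul_nonneg (by norm_num) (pow_nonneg hu 8)
  have h9 : (0:ℝ) ≤ 1 * ((-97/50) - t)^9 := mul_nonneg (by norm_num) (pow_nonneg hu 9)
  have hE : -(fP t + 26 * fQ t) = (-1)*t^9 + 29*t^8 + 22*t^7 + (-44)*t^6 + (-60)*t^5 + (-44)*t^4 + 41*t^3 + (-73)*t^2 + (-82)*t + 108 := by simp only [fP, fQ]; try ring
  have key : ((-1)*t^9 + 29*t^8 + 22*t^7 + (-44)*t^6 + (-60)*t^5 + (-44)*t^4 + 41*t^3 + (-73)*t^2 + (-82)*t + 108) = (4502585532845443667/1953125000000000) + ((493572079416838449/39062500000000) * ((-97/50) - t)^1 + (5477046521748617/195312500000) * ((-97/50) - t)^2 + (131439226589359/3906250000) * ((-97/50) - t)^3 + (3851356934441/156250000) * ((-97/50) - t)^4 + (35785171003/3125000) * ((-97/50) - t)^5 + (103956233/31250) * ((-97/50) - t)^6 + (352231/625) * ((-97/50) - t)^7 + (2323/50) * ((-97/50) - t)^8 + 1 * ((-97/50) - t)^9) := by ring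
  rw [hE]
  linarith [key, h1, h2, h3, h4, h5, h6, h7, h8, h9]

set_option maxHeartbeats 2000000 in
lemma cWpos : ∀ t : ℝ, (-97/50) ≤ t → t ≤ (-34/25) → 0 < fW t := by
  intro t h1 h2
  have hu : (0:ℝ) ≤ (t - (-97/50)) := by linarith
  have hv : (0:ℝ) ≤ ((-34/25) - t) := by linarith
  have h0 : (0:ℝ) ≤ (119273961473466377425673363126091/305175781250000000000000000) * (t - (-97/50))^0 * ((-34/25) - t)^16 := mul_nonneg (mul_nonneg (by norm_num) (pow_nonneg hu 0)) (pow_nonneg hv 16)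
  have h1 : (0:ℝ) ≤ (1811269771116983153421205531387983/381469726562500000000000000) * (t - (-97/50))^1 * ((-34/25) - t)^15 := mul_nonneg (mul_nonneg (by norm_num) (pow_nonneg hu 1)) (pow_nonneg hv 15)
  have h2 : (0:ℝ) ≤ (411249116213234594301635664246729/15258789062500000000000000) * (t - (-97/50))^2 * ((-34/25) - t)^14 := mul_nonneg (mul_nonneg (by norm_num) (pow_nonneg hu 2)) (pow_nonneg hv 14)
  have h3 : (0:ℝ) ≤ (452214457968722432387949505065821/4768371582031250000000000) * (t - (-97/50))^3 * ((-34/25) - t)^13 := mul_nonneg (mul_nonneg (by norm_num) (pow_nonneg hu 3)) (pow_nonneg hv 13)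
  have h4 : (0:ℝ) ≤ (220668302213180311404216888921257/953674316406250000000000) * (t - (-97/50))^4 * ((-34/25) - t)^12 := mul_nonneg (mul_nonneg (by norm_num) (pow_nonneg hu 4)) (pow_nonneg hv 12)
  have h5 : (0:ℝ) ≤ (4943851573612722892435610201907307/11920928955078125000000000) * (t - (-97/50))^5 * ((-34/25) - t)^11 := mul_nonneg (mul_nonneg (by norm_num) (pow_nonneg hu 5)) (pow_nonneg hv 11)
  have h6 : (0:ℝ) ≤ (269020915508835269587630412074177/476837158203125000000000) * (t - (-97/50))^6 * ((-34/25) - t)^10 := mul_nonneg (mul_nonneg (by norm_num) (pow_nonneg hu 6)) (pow_nonneg hv 10)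
  have h7 : (0:ℝ) ≤ (176812029159962698426066113658609/298023223876953125000000) * (t - (-97/50))^7 * ((-34/25) - t)^9 := mul_nonneg (mul_nonneg (by norm_num) (pow_nonneg hu 7)) (pow_nonneg hv 9)
  have h8 : (0:ℝ) ≤ (57973980638703481781371566073861/119209289550781250000000) * (t - (-97/50))^8 * ((-34/25) - t)^8 := mul_nonneg (mul_nonneg (by norm_num) (pow_nonneg hu 8)) (pow_nonneg hv 8)
  have h9 : (0:ℝ) ≤ (46311800092550137751083884267177/149011611938476562500000) * (t - (-97/50))^9 * ((-34/25) - t)^7 := mul_nonneg (mul_nonneg (by norm_num) (pow_nonneg hu 9)) (pow_nonneg hv 7)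
  have h10 : (0:ℝ) ≤ (11444866791554466345484393309363/74505805969238281250000) * (t - (-97/50))^10 * ((-34/25) - t)^6 := mul_nonneg (mul_nonneg (by norm_num) (pow_nonneg hu 10)) (pow_nonneg hv 6)
  have h11 : (0:ℝ) ≤ (10742512426957179137622667829533/186264514923095703125000) * (t - (-97/50))^11 * ((-34/25) - t)^5 := mul_nonneg (mul_nonneg (by norm_num) (pow_nonneg hu 11)) (pow_nonneg hv 5)
  have h12 : (0:ℝ) ≤ (237306618214636640684820638391/14901161193847656250000) * (t - (-97/50))^12 * ((-34/25) - t)^4 := mul_nonneg (mul_nonneg (by norm_num) (pow_nonneg hu 12)) (pow_nonneg hv 4)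
  have h13 : (0:ℝ) ≤ (56881435565955863176171514641/18626451492309570312500) * (t - (-97/50))^13 * ((-34/25) - t)^3 := mul_nonneg (mul_nonneg (by norm_num) (pow_nonneg hu 13)) (pow_nonneg hv 3)
  have h14 : (0:ℝ) ≤ (1354863500422158471268951917/3725290298461914062500) * (t - (-97/50))^14 * ((-34/25) - t)^2 := mul_nonneg (mul_nonneg (by norm_num) (pow_nonneg hu 14)) (pow_nonneg hv 2)
  have h15 : (0:ℝ) ≤ (472261854366468234700417182/23283064365386962890625) * (t - (-97/50))^15 * ((-34/25) - t)^1 := mul_nonneg (mul_nonneg (by norm_num) (pow_nonneg hu 15)) (pow_nonneg hv 1)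
  have hE : fW t = (-1)*t^16 + (-2)*t^15 + 13*t^14 + (-20)*t^13 + 16*t^12 + (-36)*t^11 + 74*t^10 + (-48)*t^9 + (-22)*t^8 + 28*t^7 + (-204)*t^6 + 276*t^5 + (-193)*t^4 + 242*t^3 + (-183)*t^2 + 64*t + (-4) := by simp only [fW]; try ring
  have key : ((250246473680347348787521/1525878906250000000000000000):ℝ) * ((-1)*t^16 + (-2)*t^15 + 13*t^14 + (-20)*t^13 + 16*t^12 + (-36)*t^11 + 74*t^10 + (-48)*t^9 + (-22)*t^8 + 28*t^7 + (-204)*t^6 + 276*t^5 + (-193)*t^4 + 242*t^3 + (-183)*t^2 + 64*t + (-4)) = (128416156108950931145362597653401602097709680751/555111512312578270211815834045410156250000000000) + ((119273961473466377425673363126091/305175781250000000000000000) * (t - (-97/50))^0 * ((-34/25) - t)^16 + (1811269771116983153421205531387983/381469726562500000000000000) * (t - (-97/50))^1 * ((-34/25) - t)^15 + (411249116213234594301635664246729/15258789062500000000000000) * (t - (-97/50))^2 * ((-34/25) - t)^14 + (452214457968722432387949505065821/4768371582031250000000000) * (t - (-97/50))^3 * ((-34/25) - t)^13 + (220668302213180311404216888921257/953674316406250000000000)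 * (t - (-97/50))^4 * ((-34/25) - t)^12 + (4943851573612722892435610201907307/11920928955078125000000000) * (t - (-97/50))^5 * ((-34/25) - t)^11 + (269020915508835269587630412074177/476837158203125000000000) * (t - (-97/50))^6 * ((-34/25) - t)^10 + (176812029159962698426066113658609/298023223876953125000000) * (t - (-97/50))^7 * ((-34/25) - t)^9 + (57973980638703481781371566073861/119209289550781250000000) * (t - (-97/50))^8 * ((-34/25) - t)^8 + (46311800092550137751083884267177/149011611938476562500000) * (t - (-97/50))^9 * ((-34/25) - t)^7 + (11444866791554466345484393309363/74505805969238281250000) * (t - (-97/50))^10 * ((-34/25) - t)^6 + (10742512426957179137622667829533/186264514923095703125000) * (t - (-97/50))^11 * ((-34/25) - t)^5 + (237306618214636640684820638391/14901161193847656250000) * (t - (-97/50))^12 * ((-34/25) - t)^4 + (56881435565955863176171514641/18626451492309570312500) * (t - (-97/50))^13 * ((-34/25) - t)^3 + (1354863500422158471268951917/3725290298461914062500) * (t - (-97/50))^14 * ((-34/25) - t)^2 + (472261854366468234700417182/23283064365386962890625) * (t - (-97/50))^15 * ((-34/25) - t)^1) := by ring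
  rw [hE]
  linarith [key, h0, h1, h2, h3, h4, h5, h6, h7, h8, h9, h10, h11, h12, h13, h14, h15]

set_option maxHeartbeats 2000000 in
lemma cD26neg1 : ∀ t : ℝ, (-97/50) ≤ t → t ≤ (-3/2) → 0 < -(fP t + 26 * fQ t) := by
  intro t h1 h2
  have hu : (0:ℝ) ≤ (t - (-97/50)) := by linarith
  have hv : (0:ℝ) ≤ ((-3/2) - t) := by linarith
  have h0 : (0:ℝ) ≤ (2186982692570182771/976562500000000) * (t - (-97/50))^0 * ((-3/2) - t)^9 := mul_nonneg (mul_nonneg (by norm_num) (pow_nonneg hu 0)) (pow_nonneg hv 9)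
  have h1 : (0:ℝ) ≤ (7126775679773211/488281250000) * (t - (-97/50))^1 * ((-3/2) - t)^8 := mul_nonneg (mul_nonneg (by norm_num) (pow_nonneg hu 1)) (pow_nonneg hv 8)
  have h2 : (0:ℝ) ≤ (16239525990758983/390625000000) * (t - (-97/50))^2 * ((-3/2) - t)^7 := mul_nonneg (mul_nonneg (by norm_num) (pow_nonneg hu 2)) (pow_nonneg hv 7)
  have h3 : (0:ℝ) ≤ (263998732709723/3906250000) * (t - (-97/50))^3 * ((-3/2) - t)^6 := mul_nonneg (mul_nonneg (by norm_num) (pow_nonneg hu 3)) (pow_nonneg hv 6)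
  have h4 : (0:ℝ) ≤ (85714233459877/1250000000) * (t - (-97/50))^4 * ((-3/2) - t)^5 := mul_nonneg (mul_nonneg (by norm_num) (pow_nonneg hu 4)) (pow_nonneg hv 5)
  have h5 : (0:ℝ) ≤ (55566465889/1250000) * (t - (-97/50))^5 * ((-3/2) - t)^4 := mul_nonneg (mul_nonneg (by norm_num) (pow_nonneg hu 5)) (pow_nonneg hv 4)
  have h6 : (0:ℝ) ≤ (3595018119/200000) * (t - (-97/50))^6 * ((-3/2) - t)^3 := mul_nonneg (mul_nonneg (by norm_num) (pow_nonneg hu 6)) (pow_nonneg hv 3)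
  have h7 : (0:ℝ) ≤ (41431929/10000) * (t - (-97/50))^7 * ((-3/2) - t)^2 := mul_nonneg (mul_nonneg (by norm_num) (pow_nonneg hu 7)) (pow_nonneg hv 2)
  have h8 : (0:ℝ) ≤ (2665883/6400) * (t - (-97/50))^8 * ((-3/2) - t)^1 := mul_nonneg (mul_nonneg (by norm_num) (pow_nonneg hu 8)) (pow_nonneg hv 1)
  have hE : -(fP t + 26 * fQ t) = (-1)*t^9 + 29*t^8 + 22*t^7 + (-44)*t^6 + (-60)*t^5 + (-44)*t^4 + 41*t^3 + (-73)*t^2 + (-82)*t + 108 := by simp only [fP, fQ]; try ring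
  have key : ((2357947691/3814697265625):ℝ) * ((-1)*t^9 + 29*t^8 + 22*t^7 + (-44)*t^6 + (-60)*t^5 + (-44)*t^4 + 41*t^3 + (-73)*t^2 + (-82)*t + 108) = (79502922297447/1953125000000000) + ((2186982692570182771/976562500000000) * (t - (-97/50))^0 * ((-3/2) - t)^9 + (7126775679773211/488281250000) * (t - (-97/50))^1 * ((-3/2) - t)^8 + (16239525990758983/390625000000) * (t - (-97/50))^2 * ((-3/2) - t)^7 + (263998732709723/3906250000) * (t - (-97/50))^3 * ((-3/2) - t)^6 + (85714233459877/1250000000) * (t - (-97/50))^4 * ((-3/2) - t)^5 + (55566465889/1250000) * (t - (-97/50))^5 * ((-3/2) - t)^4 + (3595018119/200000) * (t - (-97/50))^6 * ((-3/2) - t)^3 + (41431929/10000) * (t - (-97/50))^7 * ((-3/2) - t)^2 + (2665883/6400) * (t - (-97/50))^8 * ((-3/2) - t)^1) := by ring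
  rw [hE]
  linarith [key, h0, h1, h2, h3, h4, h5, h6, h7, h8]

set_option maxHeartbeats 2000000 in
lemma cQpos1 : ∀ t : ℝ, (-3/2) ≤ t → t ≤ (-34/25) → 0 < fQ t := by
  intro t h1 h2
  have hu : (0:ℝ) ≤ (t - (-3/2)) := by linarith
  have hv : (0:ℝ) ≤ ((-34/25) - t) := by linarith
  have h0 : (0:ℝ) ≤ (178989032689901/39062500000000) * (t - (-3/2))^0 * ((-34/25) - t)^8 := mul_nonneg (mul_nonneg (by norm_num) (pow_nonneg hu 0)) (pow_nonneg hv 8)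
  have h1 : (0:ℝ) ≤ (633796706931479/19531250000000) * (t - (-3/2))^1 * ((-34/25) - t)^7 := mul_nonneg (mul_nonneg (by norm_num) (pow_nonneg hu 1)) (pow_nonneg hv 7)
  have h2 : (0:ℝ) ≤ (239614169023733/2441406250000) * (t - (-3/2))^2 * ((-34/25) - t)^6 := mul_nonneg (mul_nonneg (by norm_num) (pow_nonneg hu 2)) (pow_nonneg hv 6)
  have h3 : (0:ℝ) ≤ (401395379063091/2441406250000) * (t - (-3/2))^3 * ((-34/25) - t)^5 := mul_nonneg (mul_nonneg (by norm_num) (pow_nonneg hu 3)) (pow_nonneg hv 5)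
  have h4 : (0:ℝ) ≤ (40237747314527/244140625000) * (t - (-3/2))^4 * ((-34/25) - t)^4 := mul_nonneg (mul_nonneg (by norm_num) (pow_nonneg hu 4)) (pow_nonneg hv 4)
  have h5 : (0:ℝ) ≤ (60364253894679/610351562500) * (t - (-3/2))^5 * ((-34/25) - t)^3 := mul_nonneg (mul_nonneg (by norm_num) (pow_nonneg hu 5)) (pow_nonneg hv 3)
  have h6 : (0:ℝ) ≤ (20083020825777/610351562500) * (t - (-3/2))^6 * ((-34/25) - t)^2 := mul_nonneg (mul_nonneg (by norm_num) (pow_nonneg hu 6)) (pow_nonneg hv 2)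
  have h7 : (0:ℝ) ≤ (1429194670911/305175781250) * (t - (-3/2))^7 * ((-34/25) - t)^1 := mul_nonneg (mul_nonneg (by norm_num) (pow_nonneg hu 7)) (pow_nonneg hv 1)
  have hE : fQ t = (-1)*t^8 + (-1)*t^7 + 2*t^6 + 2*t^5 + 2*t^4 + (-2)*t^3 + 3*t^2 + 3*t + (-4) := by simp only [fQ]; try ring
  have key : ((5764801/39062500000000):ℝ) * ((-1)*t^8 + (-1)*t^7 + 2*t^6 + 2*t^5 + 2*t^4 + (-2)*t^3 + 3*t^2 + 3*t + (-4)) = (4219478787765734577/2980232238769531250000000) + ((178989032689901/39062500000000) * (t - (-3/2))^0 * ((-34/25) - t)^8 + (633796706931479/19531250000000) * (t - (-3/2))^1 * ((-34/25) - t)^7 + (239614169023733/2441406250000) * (t - (-3/2))^2 * ((-34/25) - t)^6 + (401395379063091/2441406250000) * (t - (-3/2))^3 * ((-34/25) - t)^5 + (40237747314527/244140625000) * (t - (-3/2))^4 * ((-34/25) - t)^4 + (60364253894679/610351562500) * (t - (-3/2))^5 * ((-34/25) - t)^3 + (20083020825777/610351562500) * (t - (-3/2))^6 * ((-34/25) -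 t)^2 + (1429194670911/305175781250) * (t - (-3/2))^7 * ((-34/25) - t)^1) := by ring
  rw [hE]
  linarith [key, h0, h1, h2, h3, h4, h5, h6, h7]

set_option maxHeartbeats 2000000 in
lemma cD26pos : ∀ t : ℝ, (-34/25) ≤ t → t ≤ (-127/100) → 0 < fP t + 26 * fQ t := by
  intro t h1 h2
  have hu : (0:ℝ) ≤ (t - (-34/25)) := by linarith
  have hv : (0:ℝ) ≤ ((-127/100) - t) := by linarith
  have h1 : (0:ℝ) ≤ (95164380992313/7629394531250) * (t - (-34/25))^1 * ((-127/100) - t)^8 := mul_nonneg (mul_nonneg (by norm_num) (pow_nonneg hu 1)) (pow_nonneg hv 8)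
  have h2 : (0:ℝ) ≤ (5190210540323703/61035156250000) * (t - (-34/25))^2 * ((-127/100) - t)^7 := mul_nonneg (mul_nonneg (by norm_num) (pow_nonneg hu 2)) (pow_nonneg hv 7)
  have h3 : (0:ℝ) ≤ (60782791303026387/244140625000000) * (t - (-34/25))^3 * ((-127/100) - t)^6 := mul_nonneg (mul_nonneg (by norm_num) (pow_nonneg hu 3)) (pow_nonneg hv 6)
  have h4 : (0:ℝ) ≤ (3967110057072843/9765625000000) * (t - (-34/25))^4 * ((-127/100) - t)^5 := mul_nonneg (mul_nonneg (by norm_num) (pow_nonneg hu 4)) (pow_nonneg hv 5)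
  have h5 : (0:ℝ) ≤ (390451989655755621/976562500000000) * (t - (-34/25))^5 * ((-127/100) - t)^4 := mul_nonneg (mul_nonneg (by norm_num) (pow_nonneg hu 5)) (pow_nonneg hv 4)
  have h6 : (0:ℝ) ≤ (232940828583610587/976562500000000) * (t - (-34/25))^6 * ((-127/100) - t)^3 := mul_nonneg (mul_nonneg (by norm_num) (pow_nonneg hu 6)) (pow_nonneg hv 3)
  have h7 : (0:ℝ) ≤ (2531031795197761869/31250000000000000) * (t - (-34/25))^7 * ((-127/100) - t)^2 := mul_nonneg (mul_nonneg (by norm_num) (pow_nonneg hu 7)) (pow_nonneg hv 2)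
  have h8 : (0:ℝ) ≤ (128529082928870001/10000000000000000) * (t - (-34/25))^8 * ((-127/100) - t)^1 := mul_nonneg (mul_nonneg (by norm_num) (pow_nonneg hu 8)) (pow_nonneg hv 1)
  have h9 : (0:ℝ) ≤ (397242323371668429/1000000000000000000) * (t - (-34/25))^9 * ((-127/100) - t)^0 := mul_nonneg (mul_nonneg (by norm_num) (pow_nonneg hu 9)) (pow_nonneg hv 0)
  have hE : fP t + 26 * fQ t = 1*t^9 + (-29)*t^8 + (-22)*t^7 + 44*t^6 + 60*t^5 + 44*t^4 + (-41)*t^3 + 73*t^2 + 82*t + (-108) := by simp only [fP, fQ]; try ring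
  have key : ((387420489/1000000000000000000):ℝ) * (1*t^9 + (-29)*t^8 + (-22)*t^7 + 44*t^6 + 60*t^5 + 44*t^4 + (-41)*t^3 + 73*t^2 + 82*t + (-108)) = (894032111954474305551/953674316406250000000000000000) + ((95164380992313/7629394531250) * (t - (-34/25))^1 * ((-127/100) - t)^8 + (5190210540323703/61035156250000) * (t - (-34/25))^2 * ((-127/100) - t)^7 + (60782791303026387/244140625000000) * (t - (-34/25))^3 * ((-127/100) - t)^6 + (3967110057072843/9765625000000) * (t - (-34/25))^4 * ((-127/100) - t)^5 + (390451989655755621/976562500000000) * (t - (-34/25))^5 * ((-127/100) - t)^4 + (232940828583610587/976562500000000) * (t - (-34/25))^6 * ((-127/100) - t)^3 + (2531031795197761869/31250000000000000) * (t - (-34/25))^7 * ((-127/100) - t)^2 + (128529082928870001/10000000000000000) * (t - (-34/25))^8 * ((-127/100) - t)^1 + (397242323371668429/1000000000000000000) * (t - (-34/25))^9 * ((-127/100) - t)^0) := by ring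
  rw [hE]
  linarith [key, h1, h2, h3, h4, h5, h6, h7, h8, h9]

set_option maxHeartbeats 2000000 in
lemma cQpos2 : ∀ t : ℝ, (-34/25) ≤ t → t ≤ (-127/100) → 0 < fQ t := by
  intro t h1 h2
  have hu : (0:ℝ) ≤ (t - (-34/25)) := by linarith
  have hv : (0:ℝ) ≤ ((-127/100) - t) := by linarith
  have h0 : (0:ℝ) ≤ (1167998427042957/400000000000000) * (t - (-34/25))^0 * ((-127/100) - t)^8 := mul_nonneg (mul_nonneg (by norm_num) (pow_nonneg hu 0)) (pow_nonneg hv 8)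
  have h1 : (0:ℝ) ≤ (25436686936897989/1250000000000000) * (t - (-34/25))^1 * ((-127/100) - t)^7 := mul_nonneg (mul_nonneg (by norm_num) (pow_nonneg hu 1)) (pow_nonneg hv 7)
  have h2 : (0:ℝ) ≤ (151839654841129059/2500000000000000) * (t - (-34/25))^2 * ((-127/100) - t)^6 := mul_nonneg (mul_nonneg (by norm_num) (pow_nonneg hu 2)) (pow_nonneg hv 6)
  have h3 : (0:ℝ) ≤ (125806859644039011/1250000000000000) * (t - (-34/25))^3 * ((-127/100) - t)^5 := mul_nonneg (mul_nonneg (by norm_num) (pow_nonneg hu 3)) (pow_nonneg hv 5)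
  have h4 : (0:ℝ) ≤ (4000398526791387/40000000000000) * (t - (-34/25))^4 * ((-127/100) - t)^4 := mul_nonneg (mul_nonneg (by norm_num) (pow_nonneg hu 4)) (pow_nonneg hv 4)
  have h5 : (0:ℝ) ≤ (74494097114626323/1250000000000000) * (t - (-34/25))^5 * ((-127/100) - t)^3 := mul_nonneg (mul_nonneg (by norm_num) (pow_nonneg hu 5)) (pow_nonneg hv 3)
  have h6 : (0:ℝ) ≤ (49298578520801859/2500000000000000) * (t - (-34/25))^6 * ((-127/100) - t)^2 := mul_nonneg (mul_nonneg (by norm_num) (pow_nonneg hu 6)) (pow_nonneg hv 2)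
  have h7 : (0:ℝ) ≤ (6987844075046121/2500000000000000) * (t - (-34/25))^7 * ((-127/100) - t)^1 := mul_nonneg (mul_nonneg (by norm_num) (pow_nonneg hu 7)) (pow_nonneg hv 1)
  have hE : fQ t = (-1)*t^8 + (-1)*t^7 + 2*t^6 + 2*t^5 + 2*t^4 + (-2)*t^3 + 3*t^2 + 3*t + (-4) := by simp only [fQ]; try ring
  have key : ((43046721/10000000000000000):ℝ) * ((-1)*t^8 + (-1)*t^7 + 2*t^6 + 2*t^5 + 2*t^4 + (-2)*t^3 + 3*t^2 + 3*t + (-4)) = (2872794360044802621807099/100000000000000000000000000000000) + ((1167998427042957/400000000000000) * (t - (-34/25))^0 * ((-127/100) - t)^8 + (25436686936897989/1250000000000000) * (t - (-34/25))^1 * ((-127/100) - t)^7 + (151839654841129059/2500000000000000) * (t - (-34/25))^2 * ((-127/100) - t)^6 + (125806859644039011/1250000000000000) * (t - (-34/25))^3 * ((-127/100) - t)^5 + (4000398526791387/40000000000000) * (t - (-34/25))^4 * ((-127/100) - t)^4 + (74494097114626323/1250000000000000) * (t - (-34/25))^5 * ((-127/100) - t)^3 + (49298578520801859/2500000000000000)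 * (t - (-34/25))^6 * ((-127/100) - t)^2 + (6987844075046121/2500000000000000) * (t - (-34/25))^7 * ((-127/100) - t)^1) := by ring
  rw [hE]
  linarith [key, h0, h1, h2, h3, h4, h5, h6, h7]

set_option maxHeartbeats 2000000 in
lemma cWneg : ∀ t : ℝ, (-127/100) ≤ t → t ≤ (-1) → 0 < -fW t := by
  intro t h1 h2
  have hu : (0:ℝ) ≤ (t - (-127/100)) := by linarith
  have hv : (0:ℝ) ≤ ((-1) - t) := by linarith
  have h1 : (0:ℝ) ≤ (42234878675956471434012667123707903/12500000000000000000000000000000) * (t - (-127/100))^1 * ((-1) - t)^15 := mul_nonneg (mul_nonneg (by norm_num) (pow_nonneg hu 1)) (pow_nonneg hv 15)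
  have h2 : (0:ℝ) ≤ (111593452305085834380348575358792567/2500000000000000000000000000000) * (t - (-127/100))^2 * ((-1) - t)^14 := mul_nonneg (mul_nonneg (by norm_num) (pow_nonneg hu 2)) (pow_nonneg hv 14)
  have h3 : (0:ℝ) ≤ (343729919967086951593541075184695073/1250000000000000000000000000000) * (t - (-127/100))^3 * ((-1) - t)^13 := mul_nonneg (mul_nonneg (by norm_num) (pow_nonneg hu 3)) (pow_nonneg hv 13)
  have h4 : (0:ℝ) ≤ (5238473774342298533000331326419685949/5000000000000000000000000000000) * (t - (-127/100))^4 * ((-1) - t)^12 := mul_nonneg (mul_nonneg (by norm_num) (pow_nonneg hu 4)) (pow_nonneg hv 12)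
  have h5 : (0:ℝ) ≤ (17252665357931580375706853706944057847/6250000000000000000000000000000) * (t - (-127/100))^5 * ((-1) - t)^11 := mul_nonneg (mul_nonneg (by norm_num) (pow_nonneg hu 5)) (pow_nonneg hv 11)
  have h6 : (0:ℝ) ≤ (66581194377170810773380666539211545439/12500000000000000000000000000000) * (t - (-127/100))^6 * ((-1) - t)^10 := mul_nonneg (mul_nonneg (by norm_num) (pow_nonneg hu 6)) (pow_nonneg hv 10)
  have h7 : (0:ℝ) ≤ (9717589905138942380356627952030220777/1250000000000000000000000000000) * (t - (-127/100))^7 * ((-1) - t)^9 := mul_nonneg (mul_nonneg (by norm_num) (pow_nonneg hu 7)) (pow_nonneg hv 9)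
  have h8 : (0:ℝ) ≤ (87365879831046149991093491568271986993/10000000000000000000000000000000) * (t - (-127/100))^8 * ((-1) - t)^8 := mul_nonneg (mul_nonneg (by norm_num) (pow_nonneg hu 8)) (pow_nonneg hv 8)
  have h9 : (0:ℝ) ≤ (9524547634480247598346387952030220777/1250000000000000000000000000000) * (t - (-127/100))^9 * ((-1) - t)^7 := mul_nonneg (mul_nonneg (by norm_num) (pow_nonneg hu 9)) (pow_nonneg hv 7)
  have h10 : (0:ℝ) ≤ (64440920606024340145449715664211545439/12500000000000000000000000000000) * (t - (-127/100))^10 * ((-1) - t)^6 := mul_nonneg (mul_nonneg (by norm_num) (pow_nonneg hu 10)) (pow_nonneg hv 6)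
  have h11 : (0:ℝ) ≤ (16765070289464502438531740635694057847/6250000000000000000000000000000) * (t - (-127/100))^11 * ((-1) - t)^5 := mul_nonneg (mul_nonneg (by norm_num) (pow_nonneg hu 11)) (pow_nonneg hv 5)
  have h12 : (0:ℝ) ≤ (5267476313131306646177246878564685949/5000000000000000000000000000000) * (t - (-127/100))^12 * ((-1) - t)^4 := mul_nonneg (mul_nonneg (by norm_num) (pow_nonneg hu 12)) (pow_nonneg hv 4)
  have h13 : (0:ℝ) ≤ (377614057382708203552095913735745073/1250000000000000000000000000000) * (t - (-127/100))^13 * ((-1) - t)^3 := mul_nonneg (mul_nonneg (by norm_num) (pow_nonneg hu 13)) (pow_nonneg hv 3)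
  have h14 : (0:ℝ) ≤ (149139479501874944379469677315319317/2500000000000000000000000000000) * (t - (-127/100))^14 * ((-1) - t)^2 := mul_nonneg (mul_nonneg (by norm_num) (pow_nonneg hu 14)) (pow_nonneg hv 2)
  have h15 : (0:ℝ) ≤ (45288696833958314793156559105106439/6250000000000000000000000000000) * (t - (-127/100))^15 * ((-1) - t)^1 := mul_nonneg (mul_nonneg (by norm_num) (pow_nonneg hu 15)) (pow_nonneg hv 1)
  have h16 : (0:ℝ) ≤ (40752696833958314793156559105106439/100000000000000000000000000000000) * (t - (-127/100))^16 * ((-1) - t)^0 := mul_nonneg (mul_nonneg (by norm_num) (pow_nonneg hu 16)) (pow_nonneg hv 0)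
  have hE : -fW t = 1*t^16 + 2*t^15 + (-13)*t^14 + 20*t^13 + (-16)*t^12 + 36*t^11 + (-74)*t^10 + 48*t^9 + 22*t^8 + (-28)*t^7 + 204*t^6 + (-276)*t^5 + 193*t^4 + (-242)*t^3 + 183*t^2 + (-64)*t + 4 := by simp only [fW]; try ring
  have key : ((79766443076872509863361/100000000000000000000000000000000):ℝ) * (1*t^16 + 2*t^15 + (-13)*t^14 + 20*t^13 + (-16)*t^12 + 36*t^11 + (-74)*t^10 + 48*t^9 + 22*t^8 + (-28)*t^7 + 204*t^6 + (-276)*t^5 + 193*t^4 + (-242)*t^3 + 183*t^2 + (-64)*t + 4) = (4789759789913770523575388187241550878222756296470748718521/10000000000000000000000000000000000000000000000000000000000000000) + ((42234878675956471434012667123707903/12500000000000000000000000000000) * (t - (-127/100))^1 * ((-1) - t)^15 + (111593452305085834380348575358792567/2500000000000000000000000000000) * (t - (-127/100))^2 * ((-1) - t)^14 + (343729919967086951593541075184695073/1250000000000000000000000000000) * (t - (-127/100))^3 * ((-1) - t)^13 + (5238473774342298533000331326419685949/5000000000000000000000000000000) * (t - (-127/100))^4 * ((-1) - t)^12 + (17252665357931580375706853706944057847/6250000000000000000000000000000)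 * (t - (-127/100))^5 * ((-1) - t)^11 + (66581194377170810773380666539211545439/12500000000000000000000000000000) * (t - (-127/100))^6 * ((-1) - t)^10 + (9717589905138942380356627952030220777/1250000000000000000000000000000) * (t - (-127/100))^7 * ((-1) - t)^9 + (87365879831046149991093491568271986993/10000000000000000000000000000000) * (t - (-127/100))^8 * ((-1) - t)^8 + (9524547634480247598346387952030220777/1250000000000000000000000000000) * (t - (-127/100))^9 * ((-1) - t)^7 + (64440920606024340145449715664211545439/12500000000000000000000000000000) * (t - (-127/100))^10 * ((-1) - t)^6 + (16765070289464502438531740635694057847/6250000000000000000000000000000) * (t - (-127/100))^11 * ((-1) - t)^5 + (5267476313131306646177246878564685949/5000000000000000000000000000000) * (t - (-127/100))^12 * ((-1) - t)^4 + (377614057382708203552095913735745073/1250000000000000000000000000000) * (t - (-127/100))^13 * ((-1) - t)^3 + (149139479501874944379469677315319317/2500000000000000000000000000000) * (t - (-127/100))^14 * ((-1) - t)^2 + (45288696833958314793156559105106439/6250000000000000000000000000000) * (t - (-127/100))^15 * ((-1) - t)^1 + (40752696833958314793156559105106439/100000000000000000000000000000000) * (t - (-127/100))^16 * ((-1) -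 t)^0) := by ring
  rw [hE]
  linarith [key, h1, h2, h3, h4, h5, h6, h7, h8, h9, h10, h11, h12, h13, h14, h15, h16]

set_option maxHeartbeats 2000000 in
lemma cQtneg1 : ∀ t : ℝ, (-127/100) ≤ t → t ≤ (-1) → 0 < -fQt t := by
  intro t h1 h2
  have hu : (0:ℝ) ≤ (t - (-127/100)) := by linarith
  have hv : (0:ℝ) ≤ ((-1) - t) := by linarith
  have h0 : (0:ℝ) ≤ (671728127974497/100000000000000) * (t - (-127/100))^0 * ((-1) - t)^7 := mul_nonneg (mul_nonneg (by norm_num) (pow_nonneg hu 0)) (pow_nonneg hv 7)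
  have h1 : (0:ℝ) ≤ (40681165459977/1000000000000) * (t - (-127/100))^1 * ((-1) - t)^6 := mul_nonneg (mul_nonneg (by norm_num) (pow_nonneg hu 1)) (pow_nonneg hv 6)
  have h2 : (0:ℝ) ≤ (1017998823267/10000000000) * (t - (-127/100))^2 * ((-1) - t)^5 := mul_nonneg (mul_nonneg (by norm_num) (pow_nonneg hu 2)) (pow_nonneg hv 5)
  have h3 : (0:ℝ) ≤ (108003699/800000) * (t - (-127/100))^3 * ((-1) - t)^4 := mul_nonneg (mul_nonneg (by norm_num) (pow_nonneg hu 3)) (pow_nonneg hv 4)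
  have h4 : (0:ℝ) ≤ (100224621/1000000) * (t - (-127/100))^4 * ((-1) - t)^3 := mul_nonneg (mul_nonneg (by norm_num) (pow_nonneg hu 4)) (pow_nonneg hv 3)
  have h5 : (0:ℝ) ≤ (395361/10000) * (t - (-127/100))^5 * ((-1) - t)^2 := mul_nonneg (mul_nonneg (by norm_num) (pow_nonneg hu 5)) (pow_nonneg hv 2)
  have h6 : (0:ℝ) ≤ (162/25) * (t - (-127/100))^6 * ((-1) - t)^1 := mul_nonneg (mul_nonneg (by norm_num) (pow_nonneg hu 6)) (pow_nonneg hv 1)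
  have hE : -fQt t = 1*t^7 + (-2)*t^5 + (-2)*t^3 + 4*t^2 + (-7)*t + 4 := by simp only [fQt]; try ring
  have key : ((10460353203/100000000000000):ℝ) * (1*t^7 + (-2)*t^5 + (-2)*t^3 + 4*t^2 + (-7)*t + 4) = (94143178827/50000000000000) + ((671728127974497/100000000000000) * (t - (-127/100))^0 * ((-1) - t)^7 + (40681165459977/1000000000000) * (t - (-127/100))^1 * ((-1) - t)^6 + (1017998823267/10000000000) * (t - (-127/100))^2 * ((-1) - t)^5 + (108003699/800000) * (t - (-127/100))^3 * ((-1) - t)^4 + (100224621/1000000) * (t - (-127/100))^4 * ((-1) - t)^3 + (395361/10000) * (t - (-127/100))^5 * ((-1) - t)^2 + (162/25) * (t - (-127/100))^6 * ((-1) - t)^1) := by ring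
  rw [hE]
  linarith [key, h0, h1, h2, h3, h4, h5, h6]

set_option maxHeartbeats 2000000 in
lemma cQtneg2 : ∀ t : ℝ, (-1) ≤ t → t ≤ 0 → 0 < -fQt t := by
  intro t h1 h2
  have hu : (0:ℝ) ≤ (t - (-1)) := by linarith
  have hv : (0:ℝ) ≤ (0 - t) := by linarith
  have h0 : (0:ℝ) ≤ 14 * (t - (-1))^0 * (0 - t)^7 := mul_nonneg (mul_nonneg (by norm_num) (pow_nonneg hu 0)) (pow_nonneg hv 7)
  have h1 : (0:ℝ) ≤ 74 * (t - (-1))^1 * (0 - t)^6 := mul_nonneg (mul_nonneg (by norm_num) (pow_nonneg hu 1)) (pow_nonneg hv 6)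
  have h2 : (0:ℝ) ≤ 159 * (t - (-1))^2 * (0 - t)^5 := mul_nonneg (mul_nonneg (by norm_num) (pow_nonneg hu 2)) (pow_nonneg hv 5)
  have h3 : (0:ℝ) ≤ 188 * (t - (-1))^3 * (0 - t)^4 := mul_nonneg (mul_nonneg (by norm_num) (pow_nonneg hu 3)) (pow_nonneg hv 4)
  have h4 : (0:ℝ) ≤ 127 * (t - (-1))^4 * (0 - t)^3 := mul_nonneg (mul_nonneg (by norm_num) (pow_nonneg hu 4)) (pow_nonneg hv 3)
  have h5 : (0:ℝ) ≤ 46 * (t - (-1))^5 * (0 - t)^2 := mul_nonneg (mul_nonneg (by norm_num) (pow_nonneg hu 5)) (pow_nonneg hv 2)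
  have h6 : (0:ℝ) ≤ 7 * (t - (-1))^6 * (0 - t)^1 := mul_nonneg (mul_nonneg (by norm_num) (pow_nonneg hu 6)) (pow_nonneg hv 1)
  have hE : -fQt t = 1*t^7 + (-2)*t^5 + (-2)*t^3 + 4*t^2 + (-7)*t + 4 := by simp only [fQt]; try ring
  have key : (1:ℝ) * (1*t^7 + (-2)*t^5 + (-2)*t^3 + 4*t^2 + (-7)*t + 4) = 4 + (14 * (t - (-1))^0 * (0 - t)^7 + 74 * (t - (-1))^1 * (0 - t)^6 + 159 * (t - (-1))^2 * (0 - t)^5 + 188 * (t - (-1))^3 * (0 - t)^4 + 127 * (t - (-1))^4 * (0 - t)^3 + 46 * (t - (-1))^5 * (0 - t)^2 + 7 * (t - (-1))^6 * (0 - t)^1) := by ring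
  rw [hE]
  linarith [key, h0, h1, h2, h3, h4, h5, h6]

set_option maxHeartbeats 2000000 in
lemma cD26neg2 : ∀ t : ℝ, (-1) ≤ t → t ≤ 0 → 0 < -(fP t + 26 * fQ t) := by
  intro t h1 h2
  have hu : (0:ℝ) ≤ (t - (-1)) := by linarith
  have hv : (0:ℝ) ≤ (0 - t) := by linarith
  have h1 : (0:ℝ) ≤ 240 * (t - (-1))^1 * (0 - t)^8 := mul_nonneg (mul_nonneg (by norm_num) (pow_nonneg hu 1)) (pow_nonneg hv 8)
  have h2 : (0:ℝ) ≤ 1786 * (t - (-1))^2 * (0 - t)^7 := mul_nonneg (mul_nonneg (by norm_num) (pow_nonneg hu 2)) (pow_nonneg hv 7)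
  have h3 : (0:ℝ) ≤ 5341 * (t - (-1))^3 * (0 - t)^6 := mul_nonneg (mul_nonneg (by norm_num) (pow_nonneg hu 3)) (pow_nonneg hv 6)
  have h4 : (0:ℝ) ≤ 8962 * (t - (-1))^4 * (0 - t)^5 := mul_nonneg (mul_nonneg (by norm_num) (pow_nonneg hu 4)) (pow_nonneg hv 5)
  have h5 : (0:ℝ) ≤ 9321 * (t - (-1))^5 * (0 - t)^4 := mul_nonneg (mul_nonneg (by norm_num) (pow_nonneg hu 5)) (pow_nonneg hv 4)
  have h6 : (0:ℝ) ≤ 6112 * (t - (-1))^6 * (0 - t)^3 := mul_nonneg (mul_nonneg (by norm_num) (pow_nonneg hu 6)) (pow_nonneg hv 3)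
  have h7 : (0:ℝ) ≤ 2455 * (t - (-1))^7 * (0 - t)^2 := mul_nonneg (mul_nonneg (by norm_num) (pow_nonneg hu 7)) (pow_nonneg hv 2)
  have h8 : (0:ℝ) ≤ 550 * (t - (-1))^8 * (0 - t)^1 := mul_nonneg (mul_nonneg (by norm_num) (pow_nonneg hu 8)) (pow_nonneg hv 1)
  have h9 : (0:ℝ) ≤ 52 * (t - (-1))^9 * (0 - t)^0 := mul_nonneg (mul_nonneg (by norm_num) (pow_nonneg hu 9)) (pow_nonneg hv 0)
  have hE : -(fP t + 26 * fQ t) = (-1)*t^9 + 29*t^8 + 22*t^7 + (-44)*t^6 + (-60)*t^5 + (-44)*t^4 + 41*t^3 + (-73)*t^2 + (-82)*t + 108 := by simp only [fP, fQ]; try ring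
  have key : (1:ℝ) * ((-1)*t^9 + 29*t^8 + 22*t^7 + (-44)*t^6 + (-60)*t^5 + (-44)*t^4 + 41*t^3 + (-73)*t^2 + (-82)*t + 108) = 56 + (240 * (t - (-1))^1 * (0 - t)^8 + 1786 * (t - (-1))^2 * (0 - t)^7 + 5341 * (t - (-1))^3 * (0 - t)^6 + 8962 * (t - (-1))^4 * (0 - t)^5 + 9321 * (t - (-1))^5 * (0 - t)^4 + 6112 * (t - (-1))^6 * (0 - t)^3 + 2455 * (t - (-1))^7 * (0 - t)^2 + 550 * (t - (-1))^8 * (0 - t)^1 + 52 * (t - (-1))^9 * (0 - t)^0) := by ring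
  rw [hE]
  linarith [key, h1, h2, h3, h4, h5, h6, h7, h8, h9]

theorem stmt_6 (n : ℕ) (hn : 26 ≤ n) :
    {t : ℝ | t < 0 ∧ (Dpoly n).IsRoot t}.ncard = 2 := by
  have hν : (26:ℝ) ≤ (n:ℝ) := by exact_mod_cast hn
  set ν : ℝ := (n:ℝ) with hνdef
  have hF : ∀ t : ℝ, (Dpoly n).eval t = fP t + ν * fQ t := by
    intro t
    simp only [Dpoly, fP, fQ, eval_add, eval_sub, eval_mul, eval_pow, eval_C, eval_X]
    ring
  have hFd : ∀ t : ℝ, (Dpoly n).derivative.eval t = fPd t + ν * fQd t := by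
    intro t
    simp only [Dpoly, derivative_add, derivative_sub, derivative_mul, derivative_C,
      derivative_X_pow, derivative_X, fPd, fQd, eval_add, eval_sub, eval_mul, eval_pow,
      eval_C, eval_X, eval_one, eval_natCast, eval_zero, zero_mul, mul_one, one_mul, mul_zero, add_zero]
    push_cast
    ring
  have hFderiv : ∀ t : ℝ, HasDerivAt (fun t : ℝ => (Dpoly n).eval t) (fPd t + ν * fQd t) t := by
    intro t
    have := (Dpoly n).hasDerivAt t
    rwa [hFd t] at this
  have hkey : ∀ t : ℝ, fQ t * (fPd t + ν * fQd t) = fW t + fQd t * (fP t + ν * fQ t) := by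
    intro t; simp only [fP, fQ, fPd, fQd, fW]; ring
  have hQfact : ∀ t : ℝ, fQ t = (t + 1) * fQt t := by
    intro t; simp only [fQ, fQt]; ring
  -- Region 1 : t ≤ -97/50
  have R1 : ∀ t : ℝ, t ≤ -97/50 → (Dpoly n).eval t < 0 := by
    intro t ht
    have hq := cQtail t ht
    have hd := cD26tail t ht
    have h3 := mul_nonneg (show (0:ℝ) ≤ ν - 26 by linarith) (show (0:ℝ) ≤ -fQ t by linarith)
    rw [hF t]; nlinarith [hq, hd, h3]
  -- Region 5 : -1 ≤ t ≤ 0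
  have R5 : ∀ t : ℝ, -1 ≤ t → t ≤ 0 → (Dpoly n).eval t < 0 := by
    intro t h1 h2
    have hqt := cQtneg2 t h1 h2
    have hq : fQ t ≤ 0 := by
      rw [hQfact t]
      nlinarith [mul_nonneg (show (0:ℝ) ≤ t + 1 by linarith) (show (0:ℝ) ≤ -fQt t by linarith)]
    have hd := cD26neg2 t h1 h2
    have h3 := mul_nonneg (show (0:ℝ) ≤ ν - 26 by linarith) (show (0:ℝ) ≤ -fQ t by linarith)
    rw [hF t]; nlinarith [hd, h3]
  -- Region 3 : -34/25 ≤ t ≤ -127/100 : positive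
  have R3 : ∀ t : ℝ, -34/25 ≤ t → t ≤ -127/100 → 0 < (Dpoly n).eval t := by
    intro t h1 h2
    have hd := cD26pos t h1 h2
    have hq := cQpos2 t h1 h2
    have h3 := mul_nonneg (show (0:ℝ) ≤ ν - 26 by linarith) hq.le
    rw [hF t]; nlinarith [hd, h3]
  -- Region 2 : roots have positive derivative
  have hUp : ∀ t : ℝ, -97/50 ≤ t → t ≤ -34/25 → (Dpoly n).eval t = 0 →
      0 < fPd t + ν * fQd t := by
    intro t h1 h2 h0
    rw [hF t] at h0
    have hW := cWpos t h1 h2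
    have hQpos : 0 < fQ t := by
      rcases le_or_gt t (-3/2) with h | h
      · by_contra hq
        push_neg at hq
        have hd := cD26neg1 t h1 h
        have h3 := mul_nonneg (show (0:ℝ) ≤ ν - 26 by linarith)
          (show (0:ℝ) ≤ -fQ t by linarith)
        nlinarith [hd, h3, h0]
      · exact cQpos1 t h.le h2
    by_contra hder
    push_neg at hder
    have h4 := mul_nonneg hQpos.le (show (0:ℝ) ≤ -(fPd t + ν * fQd t) by linarith)
    have h5 := hkey t
    rw [h0, mul_zero, add_zero] at h5
    nlinarith [hW, h4, h5]
  -- Region 4 : roots have negative derivative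
  have hDown : ∀ t : ℝ, -127/100 ≤ t → t ≤ -1 → (Dpoly n).eval t = 0 →
      fPd t + ν * fQd t < 0 := by
    intro t h1 h2 h0
    rw [hF t] at h0
    have hW := cWneg t h1 h2
    have hqt := cQtneg1 t h1 h2
    have hq : 0 ≤ fQ t := by
      rw [hQfact t]
      nlinarith [mul_nonneg (show (0:ℝ) ≤ -(t + 1) by linarith)
        (show (0:ℝ) ≤ -fQt t by linarith)]
    by_contra hder
    push_neg at hder
    have h4 := mul_nonneg hq hder
    have h5 := hkey t
    rw [h0, mul_zero, add_zero] at h5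
    nlinarith [hW, h4, h5]
  -- value at -1
  have hFm1 : (Dpoly n).eval (-1) = -56 := by
    rw [hF (-1)]; simp only [fP, fQ]; norm_num
  -- existence of the two roots
  have e1 : (Dpoly n).eval (-97/50) < 0 := R1 _ le_rfl
  have e2 : 0 < (Dpoly n).eval (-34/25) := R3 _ le_rfl (by norm_num)
  have e3 : 0 < (Dpoly n).eval (-127/100) := R3 _ (by norm_num) le_rfl
  obtain ⟨r1, hr1mem, hr1⟩ : ∃ r ∈ Set.Ioo (-97/50 : ℝ) (-34/25 : ℝ), (Dpoly n).eval r = 0 := by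
    have h0 : (0:ℝ) ∈ Set.Ioo ((Dpoly n).eval (-97/50)) ((Dpoly n).eval (-34/25)) := ⟨e1, e2⟩
    have himg := intermediate_value_Ioo (by norm_num : (-97/50:ℝ) ≤ -34/25)
      (Dpoly n).continuous.continuousOn h0
    obtain ⟨r, hr, hr0⟩ := himg
    exact ⟨r, hr, hr0⟩
  obtain ⟨r2, hr2mem, hr2⟩ : ∃ r ∈ Set.Ioo (-127/100 : ℝ) (-1 : ℝ), (Dpoly n).eval r = 0 := by
    have h0 : (0:ℝ) ∈ Set.Ioo ((Dpoly n).eval (-1)) ((Dpoly n).eval (-127/100)) :=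
      ⟨by rw [hFm1]; norm_num, e3⟩
    have himg := intermediate_value_Ioo' (by norm_num : (-127/100:ℝ) ≤ -1)
      (Dpoly n).continuous.continuousOn h0
    obtain ⟨r, hr, hr0⟩ := himg
    exact ⟨r, hr, hr0⟩
  -- uniqueness in each region
  have uniqUp := atMostOne hFderiv (-97/50) (-34/25) hUp
  have hneg : ∀ s : ℝ, HasDerivAt (fun s : ℝ => (Dpoly n).eval (-s))
      (-(fPd (-s) + ν * fQd (-s))) s := by
    intro s
    have h1 : HasDerivAt (fun s : ℝ => -s) (-1) s := (hasDerivAt_id s).neg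
    have h2 := (hFderiv (-s)).comp s h1
    rw [show -(fPd (-s) + ν * fQd (-s)) = (fPd (-s) + ν * fQd (-s)) * -1 by ring]
    exact h2
  have uniqDown : ∀ x y : ℝ, -127/100 ≤ x → x ≤ -1 → -127/100 ≤ y → y ≤ -1 →
      (Dpoly n).eval x = 0 → (Dpoly n).eval y = 0 → x = y := by
    intro x y hx1 hx2 hy1 hy2 h0x h0y
    have hroot : ∀ s : ℝ, 1 ≤ s → s ≤ 127/100 → (Dpoly n).eval (-s) = 0 →
        0 < -(fPd (-s) + ν * fQd (-s)) := by
      intro s hs1 hs2 hs0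
      have := hDown (-s) (by linarith) (by linarith) hs0
      linarith
    have hxy := atMostOne hneg 1 (127/100) hroot (-x) (-y) (by linarith) (by linarith)
      (by linarith) (by linarith) (by simpa using h0x) (by simpa using h0y)
    linarith [hxy]
  -- the root set is exactly {r1, r2}
  have hsub : {t : ℝ | t < 0 ∧ (Dpoly n).IsRoot t} = {r1, r2} := by
    ext t
    simp only [Set.mem_setOf_eq, Set.mem_insert_iff, Set.mem_singleton_iff]
    constructor
    · rintro ⟨ht0, htr⟩
      have h0 : (Dpoly n).eval t = 0 := htr
      rcases le_or_gt t (-97/50) with h | h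
      · exact absurd h0 (ne_of_lt (R1 t h))
      rcases le_or_gt t (-34/25) with h' | h'
      · left
        exact uniqUp t r1 h.le h' hr1mem.1.le hr1mem.2.le h0 hr1
      rcases le_or_gt t (-127/100) with h'' | h''
      · exact absurd h0 (ne_of_gt (R3 t h'.le h''))
      rcases le_or_gt t (-1) with h3 | h3
      · right
        exact uniqDown t r2 h''.le h3 hr2mem.1.le hr2mem.2.le h0 hr2
      · exact absurd h0 (ne_of_lt (R5 t h3.le ht0.le))
    · rintro (rfl | rfl)
      · exact ⟨by linarith [hr1mem.2], hr1⟩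
      · exact ⟨by linarith [hr2mem.2], hr2⟩
  rw [hsub]
  exact Set.ncard_pair (ne_of_lt (by linarith [hr1mem.2, hr2mem.1] : r1 < r2))
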